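/- There exist a real number α > 0 and a natural number k₀ such that for every a ∈ ℝ² lying in the interior of the first quadrant or the interior of the third quadrant, and every integer k ≥ k₀, N_k(Σ₁, a) ≤ α·k², where Σ₁ = {A₁, A₂}. -/

import Mathlib

open Matrix Set

noncomputable section

/-- `XSeq S a k` is the set of all vectors `T_{k-1} ⋯ T_0 · a` with each `T_j ∈ S`
(and `XSeq S a 0 = {a}`). -/
def XSeq {n : ℕ} (S : Set (Matrix (Fin n) (Fin n) ℝ)) (a : Fin n → ℝ) : ℕ → Set (Fin n → ℝ)
  | 0 => {a}
  | k + 1 => ⋃ A ∈ S, A.mulVec '' XSeq S a k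

/-- `PHull S a k` is the convex hull of `XSeq S a k`. -/
def PHull {n : ℕ} (S : Set (Matrix (Fin n) (Fin n) ℝ)) (a : Fin n → ℝ) (k : ℕ) :
    Set (Fin n → ℝ) :=
  convexHull ℝ (XSeq S a k)

/-- `EPts S a k` is the set of extreme points of `PHull S a k`. -/
def EPts {n : ℕ} (S : Set (Matrix (Fin n) (Fin n) ℝ)) (a : Fin n → ℝ) (k : ℕ) :
    Set (Fin n → ℝ) :=
  Set.extremePoints ℝ (PHull S a k)

/-- `NExt S a k` is the number of extreme points of `PHull S a k`. -/
def NExt {n : ℕ} (S : Set (Matrix (Fin n) (Fin n) ℝ)) (a : Fin n → ℝ) (k : ℕ) : ℕ :=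
  (EPts S a k).ncard

def M1 : Matrix (Fin 2) (Fin 2) ℝ := !![0, 1; 1, 0]
def M2 : Matrix (Fin 2) (Fin 2) ℝ := !![1, 1; 0, 1]
def M3 : Matrix (Fin 2) (Fin 2) ℝ := !![1, 0; 1, 1]
def M4 : Matrix (Fin 2) (Fin 2) ℝ := !![1, 1; 1, 0]
def M5 : Matrix (Fin 2) (Fin 2) ℝ := !![0, 1; 1, 1]

/-- Interior of the first quadrant. -/
def intQ1 : Set (Fin 2 → ℝ) := {c | 0 < c 0 ∧ 0 < c 1}
/-- Interior of the second quadrant. -/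
def intQ2 : Set (Fin 2 → ℝ) := {c | c 0 < 0 ∧ 0 < c 1}
/-- Interior of the third quadrant. -/
def intQ3 : Set (Fin 2 → ℝ) := {c | c 0 < 0 ∧ c 1 < 0}
/-- Interior of the fourth quadrant. -/
def intQ4 : Set (Fin 2 → ℝ) := {c | 0 < c 0 ∧ c 1 < 0}

-- ==================== auxiliary development ====================
namespace Stmt7Aux

abbrev V2 := Fin 2 → ℝ

/-- swap map (action of M1) -/
def Sv (u : V2) : V2 := ![u 1, u 0]
/-- shear map (action of M2) -/
def Tv (u : V2) : V2 := ![u 0 + u 1, u 1]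

@[simp] lemma Sv0 (u : V2) : Sv u 0 = u 1 := rfl
@[simp] lemma Sv1 (u : V2) : Sv u 1 = u 0 := rfl
@[simp] lemma Tv0 (u : V2) : Tv u 0 = u 0 + u 1 := rfl
@[simp] lemma Tv1 (u : V2) : Tv u 1 = u 1 := rfl

lemma M1_mulVec (u : V2) : M1.mulVec u = Sv u := by
  funext i
  fin_cases i <;> simp [M1, Sv, Matrix.mulVec, dotProduct, Fin.sum_univ_two]

lemma M2_mulVec (u : V2) : M2.mulVec u = Tv u := by
  funext i
  fin_cases i <;> simp [M2, Tv, Matrix.mulVec, dotProduct, Fin.sum_univ_two]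

lemma Sv_inj : Function.Injective Sv := by
  intro u v h
  funext i
  have h0 := congrFun h 0
  have h1 := congrFun h 1
  simp [Sv] at h0 h1
  fin_cases i <;> simp [h0, h1]

lemma Tv_inj : Function.Injective Tv := by
  intro u v h
  have h0 := congrFun h 0
  have h1 := congrFun h 1
  simp [Tv] at h0 h1
  funext i
  rw [h1] at h0
  have h0' : u 0 = v 0 := by linarith
  fin_cases i
  · exact h0'
  · exact h1

lemma Sv_Sv (u : V2) : Sv (Sv u) = u := by
  funext i; fin_cases i <;> rfl

/-- the `X` sets for `Σ₁` -/
def X (a : V2) (k : ℕ) : Set V2 := XSeq {M1, M2} a k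

lemma X_zero (a : V2) : X a 0 = {a} := rfl

lemma X_succ (a : V2) (k : ℕ) :
    X a (k + 1) = Sv '' X a k ∪ Tv '' X a k := by
  show (⋃ A ∈ ({M1, M2} : Set (Matrix (Fin 2) (Fin 2) ℝ)), A.mulVec '' X a k) = _
  ext p
  simp only [Set.mem_iUnion, Set.mem_insert_iff, Set.mem_singleton_iff, exists_prop,
    Set.mem_union]
  have e1 : M1.mulVec = Sv := funext M1_mulVec
  have e2 : M2.mulVec = Tv := funext M2_mulVec
  constructor
  · rintro ⟨A, (rfl | rfl), hp⟩
    · left; rwa [e1] at hp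
    · right; rwa [e2] at hp
  · rintro (hp | hp)
    · exact ⟨M1, Or.inl rfl, by rwa [e1]⟩
    · exact ⟨M2, Or.inr rfl, by rwa [e2]⟩

lemma mem_X_succ {a : V2} {k : ℕ} {p : V2} :
    p ∈ X a (k+1) ↔ (∃ q ∈ X a k, p = Sv q) ∨ (∃ q ∈ X a k, p = Tv q) := by
  rw [X_succ]
  constructor
  · rintro (⟨q, hq, rfl⟩ | ⟨q, hq, rfl⟩)
    · exact Or.inl ⟨q, hq, rfl⟩
    · exact Or.inr ⟨q, hq, rfl⟩
  · rintro (⟨q, hq, rfl⟩ | ⟨q, hq, rfl⟩)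
    · exact Or.inl ⟨q, hq, rfl⟩
    · exact Or.inr ⟨q, hq, rfl⟩

lemma Sv_mem_X {a : V2} {k : ℕ} {q : V2} (hq : q ∈ X a k) : Sv q ∈ X a (k+1) :=
  mem_X_succ.2 (Or.inl ⟨q, hq, rfl⟩)

lemma Tv_mem_X {a : V2} {k : ℕ} {q : V2} (hq : q ∈ X a k) : Tv q ∈ X a (k+1) :=
  mem_X_succ.2 (Or.inr ⟨q, hq, rfl⟩)

lemma pad2 {a : V2} {k : ℕ} {q : V2} (hq : q ∈ X a k) : q ∈ X a (k+2) := by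
  have := Sv_mem_X (Sv_mem_X hq)
  rwa [Sv_Sv] at this

lemma X_finite (a : V2) (k : ℕ) : (X a k).Finite := by
  induction k with
  | zero => exact Set.finite_singleton a
  | succ k ih => rw [X_succ]; exact (ih.image _).union (ih.image _)

lemma X_nonempty (a : V2) (k : ℕ) : (X a k).Nonempty := by
  induction k with
  | zero => exact ⟨a, rfl⟩
  | succ k ih =>
    obtain ⟨q, hq⟩ := ih
    exact ⟨Sv q, Sv_mem_X hq⟩

lemma X_pos {a : V2} (ha : a ∈ intQ1) {k : ℕ} : ∀ p ∈ X a k, 0 < p 0 ∧ 0 < p 1 := by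
  induction k with
  | zero => rintro p rfl; exact ha
  | succ k ih =>
    intro p hp
    rcases mem_X_succ.1 hp with ⟨q, hq, rfl⟩ | ⟨q, hq, rfl⟩
    · exact ⟨(ih q hq).2, (ih q hq).1⟩
    · exact ⟨by have := ih q hq; simp [Tv]; linarith [this.1, this.2], (ih q hq).2⟩

lemma X_card_le (a : V2) (k : ℕ) : (X a k).ncard ≤ 2 ^ k := by
  induction k with
  | zero => simp [X_zero]
  | succ k ih =>
    rw [X_succ]
    calc (Sv '' X a k ∪ Tv '' X a k).ncard
        ≤ (Sv '' X a k).ncard + (Tv '' X a k).ncard := Set.ncard_union_le _ _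
      _ ≤ (X a k).ncard + (X a k).ncard :=
          add_le_add (Set.ncard_image_le (X_finite a k)) (Set.ncard_image_le (X_finite a k))
      _ ≤ 2 ^ k + 2 ^ k := by omega
      _ = 2 ^ (k+1) := by ring


/-- linear functional with coefficients c₀ c₁ -/
def fdot (c₀ c₁ : ℝ) (p : V2) : ℝ := c₀ * p 0 + c₁ * p 1

/-- `p` is the strict maximizer of the functional `(c₀, c₁)` on `X a k`. -/
def SMax (a : V2) (c₀ c₁ : ℝ) (k : ℕ) (p : V2) : Prop :=
  p ∈ X a k ∧ ∀ q ∈ X a k, q ≠ p → fdot c₀ c₁ q < fdot c₀ c₁ p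

lemma SMax_unique {a : V2} {c₀ c₁ : ℝ} {k : ℕ} {p p' : V2}
    (h : SMax a c₀ c₁ k p) (h' : SMax a c₀ c₁ k p') : p = p' := by
  by_contra hne
  have h1 := h.2 p' h'.1 (fun e => hne e.symm)
  have h2 := h'.2 p h.1 hne
  linarith

lemma SMax_scale {a : V2} {c₀ c₁ r : ℝ} {k : ℕ} {p : V2}
    (hr : 0 < r) (h : SMax a c₀ c₁ k p) : SMax a (r * c₀) (r * c₁) k p := by
  refine ⟨h.1, fun q hq hne => ?_⟩
  have := h.2 q hq hne
  have : r * (fdot c₀ c₁ q) < r * (fdot c₀ c₁ p) := by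
    exact (mul_lt_mul_iff_right₀ hr).2 this
  simpa [fdot, mul_add, mul_assoc] using this

lemma SMax_comb {a : V2} {c₀ c₁ e₀ e₁ s t : ℝ} {k : ℕ} {p : V2}
    (hs : 0 < s) (ht : 0 ≤ t)
    (h : SMax a c₀ c₁ k p) (h' : SMax a e₀ e₁ k p) :
    SMax a (s * c₀ + t * e₀) (s * c₁ + t * e₁) k p := by
  refine ⟨h.1, fun q hq hne => ?_⟩
  have h1 := h.2 q hq hne
  have h2 := h'.2 q hq hne
  have hA : s * fdot c₀ c₁ q < s * fdot c₀ c₁ p := (mul_lt_mul_iff_right₀ hs).2 h1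
  have hB : t * fdot e₀ e₁ q ≤ t * fdot e₀ e₁ p := mul_le_mul_of_nonneg_left h2.le ht
  simp only [fdot] at hA hB ⊢
  nlinarith

/-- transfer under `Tv` : `fdot c₀ c₁ (Tv u) = fdot c₀ (c₀+c₁) u`. -/
lemma fdot_Tv (c₀ c₁ : ℝ) (u : V2) : fdot c₀ c₁ (Tv u) = fdot c₀ (c₀ + c₁) u := by
  simp [fdot, Tv]; ring

/-- transfer under `Sv` : `fdot c₀ c₁ (Sv u) = fdot c₁ c₀ u`. -/
lemma fdot_Sv (c₀ c₁ : ℝ) (u : V2) : fdot c₀ c₁ (Sv u) = fdot c₁ c₀ u := by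
  simp [fdot, Sv]; ring

section Kills

/-- Kill lemma for the T-side: if `c₀ > 0` and `c₁ ≤ c₀`, a strict maximizer is a `Tv`-image
whose preimage is a strict maximizer for `(c₀, c₀+c₁)`. -/
lemma killT {a : V2} (ha : a ∈ intQ1) {k : ℕ} {c₀ c₁ : ℝ} {p : V2} (hc₀ : 0 < c₀) (hc : c₁ ≤ c₀)
    (hp : SMax a c₀ c₁ (k+2) p) :
    ∃ q ∈ X a (k+1), p = Tv q ∧ SMax a c₀ (c₀ + c₁) (k+1) q := by
  by_cases hT : ∃ q ∈ X a (k+1), p = Tv q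
  · obtain ⟨q, hq, rfl⟩ := hT
    refine ⟨q, hq, rfl, hq, fun q' hq' hne => ?_⟩
    have hTq' : Tv q' ∈ X a (k+2) := Tv_mem_X hq'
    have hTne : Tv q' ≠ Tv q := fun e => hne (Tv_inj e)
    have := hp.2 (Tv q') hTq' hTne
    rwa [fdot_Tv, fdot_Tv] at this
  · exfalso
    rcases mem_X_succ.1 hp.1 with ⟨q, hq, rfl⟩ | ⟨q, hq, hTq⟩
    · -- p = Sv q
      rcases mem_X_succ.1 hq with ⟨r, hr, rfl⟩ | ⟨r, hr, rfl⟩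
      · -- p = Sv (Sv r) = r, with r ∈ X a k
        rw [Sv_Sv] at hp
        have hr2 : (0:ℝ) < r 0 ∧ 0 < r 1 := X_pos ha r hr
        have hy : Tv (Tv r) ∈ X a (k+2) := Tv_mem_X (Tv_mem_X hr)
        have hgt : fdot c₀ c₁ r < fdot c₀ c₁ (Tv (Tv r)) := by
          simp only [fdot, Tv0, Tv1]
          nlinarith [hr2.1, hr2.2]
        have hne : Tv (Tv r) ≠ r := by
          intro e
          rw [e] at hgt; exact lt_irrefl _ hgt
        have := hp.2 (Tv (Tv r)) hy hne
        linarith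
      · -- p = Sv (Tv r)
        have hr2 : (0:ℝ) < r 0 ∧ 0 < r 1 := X_pos ha r hr
        have hy : Tv (Tv r) ∈ X a (k+2) := Tv_mem_X (Tv_mem_X hr)
        have hgt : fdot c₀ c₁ (Sv (Tv r)) < fdot c₀ c₁ (Tv (Tv r)) := by
          simp only [fdot, Tv0, Tv1, Sv0, Sv1]
          nlinarith [hr2.1, hr2.2]
        have hne : Tv (Tv r) ≠ Sv (Tv r) := by
          intro e; rw [e] at hgt; exact lt_irrefl _ hgt
        have := hp.2 (Tv (Tv r)) hy hne
        linarith
    · exact hT ⟨q, hq, hTq⟩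

/-- Kill lemma for the S-side: if `c₀ ≤ 0 ≤ c₁` and `(c₀,c₁) ≠ 0`, a strict maximizer is an
`Sv`-image whose preimage is a strict maximizer for `(c₁, c₀)`. -/
lemma killS {a : V2} (ha : a ∈ intQ1) {k : ℕ} {c₀ c₁ : ℝ} {p : V2} (hc₀ : c₀ ≤ 0) (hc₁ : 0 ≤ c₁)
    (hne0 : c₀ ≠ 0 ∨ c₁ ≠ 0)
    (hp : SMax a c₀ c₁ (k+2) p) :
    ∃ q ∈ X a (k+1), p = Sv q ∧ SMax a c₁ c₀ (k+1) q := by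
  by_cases hS : ∃ q ∈ X a (k+1), p = Sv q
  · obtain ⟨q, hq, rfl⟩ := hS
    refine ⟨q, hq, rfl, hq, fun q' hq' hne => ?_⟩
    have hSq' : Sv q' ∈ X a (k+2) := Sv_mem_X hq'
    have hSne : Sv q' ≠ Sv q := fun e => hne (Sv_inj e)
    have := hp.2 (Sv q') hSq' hSne
    rwa [fdot_Sv, fdot_Sv] at this
  · exfalso
    rcases mem_X_succ.1 hp.1 with ⟨q, hq, hSq⟩ | ⟨q, hq, rfl⟩
    · exact hS ⟨q, hq, hSq⟩
    · -- p = Tv q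
      rcases mem_X_succ.1 hq with ⟨r, hr, rfl⟩ | ⟨r, hr, rfl⟩
      · -- p = Tv (Sv r) ; beaten (or tied) by Sv (Tv r)
        have hr2 : (0:ℝ) < r 0 ∧ 0 < r 1 := X_pos ha r hr
        have hy : Sv (Tv r) ∈ X a (k+2) := Sv_mem_X (Tv_mem_X hr)
        have hgt : fdot c₀ c₁ (Tv (Sv r)) < fdot c₀ c₁ (Sv (Tv r)) := by
          simp only [fdot, Tv0, Tv1, Sv0, Sv1]
          rcases lt_or_eq_of_le hc₀ with h0 | h0
          · nlinarith [hr2.1, hr2.2]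
          · have hc₁' : 0 < c₁ := by
              rcases hne0 with h | h
              · exact absurd h0 h
              · exact lt_of_le_of_ne hc₁ (Ne.symm h)
            rw [h0]
            nlinarith [hr2.1, hr2.2]
        have hne : Sv (Tv r) ≠ Tv (Sv r) := by
          intro e; rw [e] at hgt; exact lt_irrefl _ hgt
        have := hp.2 (Sv (Tv r)) hy hne
        linarith
      · -- p = Tv (Tv r) ; beaten or tied by r itself
        have hr2 : (0:ℝ) < r 0 ∧ 0 < r 1 := X_pos ha r hr
        have hy : r ∈ X a (k+2) := pad2 hr
        have hneq : r ≠ Tv (Tv r) := by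
          intro e
          have := congrFun e 0
          simp [Tv] at this
          linarith [hr2.2]
        have hlt := hp.2 r hy hneq
        have hge : fdot c₀ c₁ (Tv (Tv r)) ≤ fdot c₀ c₁ r := by
          simp only [fdot, Tv0, Tv1]
          nlinarith [hr2.2]
        linarith

end Kills


section SW

variable {a : V2}

lemma pad2m {k : ℕ} {q : V2} (hq : q ∈ X a k) : ∀ m, q ∈ X a (k + 2*m) := by
  intro m
  induction m with
  | zero => simpa using hq
  | succ m ih =>
    have h : k + 2*(m+1) = (k + 2*m) + 2 := by ring
    rw [h]
    exact pad2 ih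

lemma mem_of_parity {k j : ℕ} {q : V2} (hq : q ∈ X a j) (hjk : j ≤ k)
    (hpar : k % 2 = j % 2) : q ∈ X a k := by
  obtain ⟨m, hm⟩ : ∃ m, k = j + 2*m := ⟨(k - j)/2, by omega⟩
  rw [hm]; exact pad2m hq m

/-- Floor lemma: every point of `X a k` dominates one of six special points,
with the appropriate parity. -/
lemma floor (ha : a ∈ intQ1) :
    ∀ k, ∀ p ∈ X a k,
      ∃ y : V2, (y 0 ≤ p 0 ∧ y 1 ≤ p 1) ∧
        ((k % 2 = 0 ∧ (y = a ∨ y = Tv (Sv a) ∨ y = Sv (Tv a))) ∨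
         (k % 2 = 1 ∧ (y = Sv a ∨ y = Tv a ∨ y = Sv (Tv (Sv a))))) := by
  intro k
  induction k with
  | zero =>
    intro p hp
    rw [X_zero, Set.mem_singleton_iff] at hp
    subst hp
    exact ⟨p, ⟨le_refl _, le_refl _⟩, Or.inl ⟨rfl, Or.inl rfl⟩⟩
  | succ k ih =>
    intro p hp
    have hx : (0:ℝ) < a 0 := ha.1
    have hy : (0:ℝ) < a 1 := ha.2
    rcases mem_X_succ.1 hp with ⟨q, hq, rfl⟩ | ⟨q, hq, rfl⟩ <;>
      obtain ⟨hq0, hq1⟩ := X_pos ha q hq <;>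
      obtain ⟨z, ⟨hz0, hz1⟩, hcase⟩ := ih q hq <;>
      rcases hcase with ⟨hpar, (heq | heq | heq)⟩ | ⟨hpar, (heq | heq | heq)⟩ <;>
      rw [heq] at hz0 hz1 <;>
      (try simp only [Sv0, Sv1, Tv0, Tv1] at hz0 hz1)
    -- branch p = Sv q : six cases
    · exact ⟨Sv a, ⟨by simpa using hz1, by simpa using hz0⟩,
        Or.inr ⟨by omega, Or.inl rfl⟩⟩
    · exact ⟨Sv (Tv (Sv a)), ⟨by simpa using hz1, by simpa using hz0⟩,
        Or.inr ⟨by omega, Or.inr (Or.inr rfl)⟩⟩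
    · exact ⟨Tv a, ⟨by simpa using hz1, by simpa using hz0⟩,
        Or.inr ⟨by omega, Or.inr (Or.inl rfl)⟩⟩
    · exact ⟨a, ⟨by simpa using hz1, by simpa using hz0⟩,
        Or.inl ⟨by omega, Or.inl rfl⟩⟩
    · exact ⟨Sv (Tv a), ⟨by simpa using hz1, by simpa using hz0⟩,
        Or.inl ⟨by omega, Or.inr (Or.inr rfl)⟩⟩
    · exact ⟨Tv (Sv a), ⟨by simpa using hz1, by simpa using hz0⟩,
        Or.inl ⟨by omega, Or.inr (Or.inl rfl)⟩⟩
    -- branch p = Tv q : six cases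
    · refine ⟨Tv a, ⟨?_, ?_⟩, Or.inr ⟨by omega, Or.inr (Or.inl rfl)⟩⟩
      · simp only [Tv0, Tv1]; linarith
      · simp only [Tv1]; linarith
    · refine ⟨Sv a, ⟨?_, ?_⟩, Or.inr ⟨by omega, Or.inl rfl⟩⟩
      · simp only [Sv0, Tv0]; linarith
      · simp only [Sv1, Tv1]; linarith
    · refine ⟨Sv (Tv (Sv a)), ⟨?_, ?_⟩, Or.inr ⟨by omega, Or.inr (Or.inr rfl)⟩⟩
      · simp only [Sv0, Sv1, Tv0, Tv1]; linarith
      · simp only [Sv0, Sv1, Tv0, Tv1]; linarith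
    · refine ⟨Tv (Sv a), ⟨?_, ?_⟩, Or.inl ⟨by omega, Or.inr (Or.inl rfl)⟩⟩
      · simp only [Sv0, Sv1, Tv0, Tv1]; linarith
      · simp only [Sv0, Sv1, Tv0, Tv1]; linarith
    · refine ⟨a, ⟨?_, ?_⟩, Or.inl ⟨by omega, Or.inl rfl⟩⟩
      · simp only [Tv0]; linarith
      · simp only [Tv1]; linarith
    · refine ⟨Sv (Tv a), ⟨?_, ?_⟩, Or.inl ⟨by omega, Or.inr (Or.inr rfl)⟩⟩
      · simp only [Sv0, Sv1, Tv0, Tv1]; linarith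
      · simp only [Sv0, Sv1, Tv0, Tv1]; linarith

/-- bound for the south-west class : a strict maximizer for a direction with
`c₀ ≤ 0` and `c₁ < 0` is one of the six special points. -/
lemma swBound (ha : a ∈ intQ1) {k : ℕ} (hk : 2 ≤ k) {c₀ c₁ : ℝ}
    (h0 : c₀ ≤ 0) (h1 : c₁ < 0) {p : V2} (hp : SMax a c₀ c₁ k p) :
    p ∈ ({a, Sv a, Tv a, Sv (Tv a), Tv (Sv a), Sv (Tv (Sv a))} : Set V2) := by
  obtain ⟨y, ⟨hy0, hy1⟩, hcase⟩ := floor ha k p hp.1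
  have ha0 : a ∈ X a 0 := rfl
  have hymem : y ∈ X a k := by
    rcases hcase with ⟨hpar, (heq | heq | heq)⟩ | ⟨hpar, (heq | heq | heq)⟩ <;> rw [heq]
    · exact mem_of_parity ha0 (by omega) (by omega)
    · exact mem_of_parity (Tv_mem_X (Sv_mem_X ha0)) (by omega) (by omega)
    · exact mem_of_parity (Sv_mem_X (Tv_mem_X ha0)) (by omega) (by omega)
    · exact mem_of_parity (Sv_mem_X ha0) (by omega) (by omega)
    · exact mem_of_parity (Tv_mem_X ha0) (by omega) (by omega)
    · exact mem_of_parity (Sv_mem_X (Tv_mem_X (Sv_mem_X ha0))) (by omega) (by omega)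
  have hfd : fdot c₀ c₁ p ≤ fdot c₀ c₁ y := by
    simp only [fdot]
    have e0 : c₀ * p 0 ≤ c₀ * y 0 := mul_le_mul_of_nonpos_left hy0 h0
    have e1 : c₁ * p 1 ≤ c₁ * y 1 := mul_le_mul_of_nonpos_left hy1 h1.le
    linarith
  have hpy : p = y := by
    by_contra hne
    have := hp.2 y hymem (fun e => hne e.symm)
    linarith
  rw [hpy]
  rcases hcase with ⟨_, (heq | heq | heq)⟩ | ⟨_, (heq | heq | heq)⟩ <;> rw [heq] <;> simp

end SW

section Sep

variable {a : V2}

/-- basis decomposition of a vector in `V2` -/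
lemma V2_decomp (u : V2) : u = u 0 • (Pi.single 0 1 : V2) + u 1 • (Pi.single 1 1 : V2) := by
  funext i
  fin_cases i <;> simp

/-- Every extreme point of `PHull {M1,M2} a k` (for `k ≥ 1`) is a strict maximizer
of some nonzero linear functional on `X a k`. -/
lemma extreme_smax (ha : a ∈ intQ1) {k : ℕ} (hk : 1 ≤ k) {p : V2}
    (hp : p ∈ EPts {M1, M2} a k) :
    ∃ c₀ c₁ : ℝ, (c₀ ≠ 0 ∨ c₁ ≠ 0) ∧ SMax a c₀ c₁ k p := by
  have hfin : (X a k).Finite := X_finite a k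
  have hpX : p ∈ X a k := extremePoints_convexHull_subset hp
  -- p is not in the convex hull of the rest
  have hnot : p ∉ convexHull ℝ (X a k \ {p}) := by
    intro hmem
    have hsub : X a k ⊆ convexHull ℝ (X a k \ {p}) := by
      intro x hx
      by_cases hxp : x = p
      · rwa [hxp]
      · exact subset_convexHull ℝ _ ⟨hx, hxp⟩
    have hEq : convexHull ℝ (X a k) = convexHull ℝ (X a k \ {p}) := by
      apply Set.Subset.antisymm
      · exact convexHull_min hsub (convex_convexHull ℝ _)
      · exact convexHull_mono Set.diff_subset
    have hp' : p ∈ extremePoints ℝ (convexHull ℝ (X a k \ {p})) := by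
      have : EPts {M1, M2} a k = extremePoints ℝ (convexHull ℝ (X a k \ {p})) := by
        unfold EPts PHull
        rw [← hEq]
        rfl
      rwa [this] at hp
    have := extremePoints_convexHull_subset hp'
    exact this.2 rfl
  -- separation
  obtain ⟨f, u, hfu, hup⟩ := geometric_hahn_banach_closed_point
    (convex_convexHull ℝ (X a k \ {p}))
    ((hfin.diff (t := {p})).isClosed_convexHull (𝕜 := ℝ)) hnot
  set c₀ : ℝ := f (Pi.single 0 1) with hc₀
  set c₁ : ℝ := f (Pi.single 1 1) with hc₁
  have hfq : ∀ q : V2, f q = fdot c₀ c₁ q := by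
    intro q
    conv_lhs => rw [V2_decomp q]
    rw [map_add, f.map_smul, f.map_smul]
    simp [fdot, hc₀, hc₁, mul_comm]
  have hstrict : ∀ q ∈ X a k, q ≠ p → fdot c₀ c₁ q < fdot c₀ c₁ p := by
    intro q hq hne
    have hqm : q ∈ convexHull ℝ (X a k \ {p}) := subset_convexHull ℝ _ ⟨hq, hne⟩
    have := (hfu q hqm).trans hup
    rw [hfq q, hfq p] at this
    exact this
  refine ⟨c₀, c₁, ?_, hpX, hstrict⟩
  -- nonzero: there is another point of X a k
  have h2 : ∃ q ∈ X a k, q ≠ p := by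
    obtain ⟨k', rfl⟩ : ∃ k', k = k' + 1 := ⟨k - 1, by omega⟩
    obtain ⟨u0, hu0⟩ := X_nonempty a k'
    by_cases hS : Sv u0 = p
    · refine ⟨Tv u0, Tv_mem_X hu0, ?_⟩
      intro hT
      rw [← hS] at hT
      have h0 := congrFun hT 0
      simp [Sv, Tv] at h0
      have hpos := X_pos ha u0 hu0
      -- h0 : u0 0 + u0 1 = u0 1
      linarith [hpos.1, hpos.2, h0]
    · exact ⟨Sv u0, Sv_mem_X hu0, hS⟩
  obtain ⟨q, hq, hne⟩ := h2
  have := hstrict q hq hne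
  by_contra hzero
  push_neg at hzero
  rw [hzero.1, hzero.2] at this
  simp [fdot] at this

end Sep

section Classes

variable (a : V2)

/-- strict maximizers for north-east directions -/
def SetA (k : ℕ) : Set V2 := {p | ∃ c₀ c₁ : ℝ, 0 < c₀ ∧ 0 < c₁ ∧ SMax a c₀ c₁ k p}
/-- strict maximizers for south-east directions -/
def SetB (k : ℕ) : Set V2 := {p | ∃ c₀ c₁ : ℝ, 0 < c₀ ∧ c₁ ≤ 0 ∧ SMax a c₀ c₁ k p}
/-- strict maximizers for south-west directions -/
def SetC (k : ℕ) : Set V2 := {p | ∃ c₀ c₁ : ℝ, c₀ ≤ 0 ∧ c₁ < 0 ∧ SMax a c₀ c₁ k p}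
/-- strict maximizers for north-west directions -/
def SetD (k : ℕ) : Set V2 :=
  {p | ∃ c₀ c₁ : ℝ, c₀ ≤ 0 ∧ 0 ≤ c₁ ∧ (c₀ ≠ 0 ∨ c₁ ≠ 0) ∧ SMax a c₀ c₁ k p}

/-- slope bands inside the north-east class -/
def Q1s (k : ℕ) : Set V2 := {p | ∃ c₀ c₁ : ℝ, 0 < c₀ ∧ c₀ < c₁ ∧ c₁ ≤ 2*c₀ ∧ SMax a c₀ c₁ k p}
def Q2s (k : ℕ) : Set V2 := {p | ∃ c₀ c₁ : ℝ, 0 < c₀ ∧ 2*c₀ < c₁ ∧ SMax a c₀ c₁ k p}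
def Q3s (k : ℕ) : Set V2 := {p | ∃ c₀ c₁ : ℝ, 0 < c₁ ∧ c₁ < c₀ ∧ SMax a c₀ c₁ k p}
def Q4s (k : ℕ) : Set V2 := {p | ∃ c₀ c₁ : ℝ, 0 < c₁ ∧ c₁ ≤ c₀ ∧ SMax a c₀ c₁ k p}

variable {a}

lemma SetA_subset_X {k : ℕ} : SetA a k ⊆ X a k := by
  rintro p ⟨c₀, c₁, _, _, hp⟩; exact hp.1
lemma SetB_subset_X {k : ℕ} : SetB a k ⊆ X a k := by
  rintro p ⟨c₀, c₁, _, _, hp⟩; exact hp.1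
lemma SetC_subset_X {k : ℕ} : SetC a k ⊆ X a k := by
  rintro p ⟨c₀, c₁, _, _, hp⟩; exact hp.1
lemma SetD_subset_X {k : ℕ} : SetD a k ⊆ X a k := by
  rintro p ⟨c₀, c₁, _, _, _, hp⟩; exact hp.1

lemma Q1s_subset {k : ℕ} : Q1s a k ⊆ SetA a k := by
  rintro p ⟨c₀, c₁, h0, h1, _, hp⟩; exact ⟨c₀, c₁, h0, by linarith, hp⟩
lemma Q2s_subset {k : ℕ} : Q2s a k ⊆ SetA a k := by
  rintro p ⟨c₀, c₁, h0, h1, hp⟩; exact ⟨c₀, c₁, h0, by linarith, hp⟩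
lemma Q3s_subset {k : ℕ} : Q3s a k ⊆ SetA a k := by
  rintro p ⟨c₀, c₁, h0, h1, hp⟩; exact ⟨c₀, c₁, by linarith, h0, hp⟩
lemma Q4s_subset {k : ℕ} : Q4s a k ⊆ SetA a k := by
  rintro p ⟨c₀, c₁, h0, h1, hp⟩; exact ⟨c₀, c₁, by linarith, h0, hp⟩

/-- transfer along the `Tv` branch -/
lemma transferT {k : ℕ} {c₀ c₁ : ℝ} {q : V2} (hq : q ∈ X a (k+1))
    (hp : SMax a c₀ c₁ (k+2) (Tv q)) : SMax a c₀ (c₀ + c₁) (k+1) q := by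
  refine ⟨hq, fun q' hq' hne => ?_⟩
  have := hp.2 (Tv q') (Tv_mem_X hq') (fun e => hne (Tv_inj e))
  rwa [fdot_Tv, fdot_Tv] at this

/-- transfer along the `Sv` branch -/
lemma transferS {k : ℕ} {c₀ c₁ : ℝ} {q : V2} (hq : q ∈ X a (k+1))
    (hp : SMax a c₀ c₁ (k+2) (Sv q)) : SMax a c₁ c₀ (k+1) q := by
  refine ⟨hq, fun q' hq' hne => ?_⟩
  have := hp.2 (Sv q') (Sv_mem_X hq') (fun e => hne (Sv_inj e))
  rwa [fdot_Sv, fdot_Sv] at this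

/-- recursion for the north-east class -/
lemma SetA_rec (ha : a ∈ intQ1) (k : ℕ) :
    SetA a (k+2) ⊆ Tv '' (Q1s a (k+1) ∪ Q2s a (k+1)) ∪ Sv '' (Q3s a (k+1)) := by
  rintro p ⟨c₀, c₁, h0, h1, hp⟩
  by_cases hc : c₁ ≤ c₀
  · obtain ⟨q, hq, rfl, hq'⟩ := killT ha h0 hc hp
    exact Or.inl ⟨q, Or.inl ⟨c₀, c₀ + c₁, h0, by linarith, by linarith, hq'⟩, rfl⟩
  · push_neg at hc
    rcases mem_X_succ.1 hp.1 with ⟨q, hq, rfl⟩ | ⟨q, hq, rfl⟩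
    · exact Or.inr ⟨q, ⟨c₁, c₀, h0, hc, transferS hq hp⟩, rfl⟩
    · exact Or.inl ⟨q, Or.inr ⟨c₀, c₀ + c₁, h0, by linarith, transferT hq hp⟩, rfl⟩

/-- recursion for the south-east class -/
lemma SetB_rec (ha : a ∈ intQ1) (k : ℕ) :
    SetB a (k+2) ⊆ Tv '' (SetB a (k+1) ∪ Q4s a (k+1)) := by
  rintro p ⟨c₀, c₁, h0, h1, hp⟩
  obtain ⟨q, hq, rfl, hq'⟩ := killT ha h0 (by linarith) hp
  by_cases hc : c₀ + c₁ ≤ 0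
  · exact ⟨q, Or.inl ⟨c₀, c₀ + c₁, h0, hc, hq'⟩, rfl⟩
  · push_neg at hc
    exact ⟨q, Or.inr ⟨c₀, c₀ + c₁, hc, by linarith, hq'⟩, rfl⟩

/-- recursion for the north-west class -/
lemma SetD_rec (ha : a ∈ intQ1) (k : ℕ) :
    SetD a (k+2) ⊆ Sv '' (SetB a (k+1) ∪ SetC a (k+1)) := by
  rintro p ⟨c₀, c₁, h0, h1, hne, hp⟩
  obtain ⟨q, hq, rfl, hq'⟩ := killS ha h0 h1 hne hp
  rcases lt_or_eq_of_le h1 with hc | hc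
  · exact ⟨q, Or.inl ⟨c₁, c₀, hc, h0, hq'⟩, rfl⟩
  · have hc0 : c₀ < 0 := by
      rcases hne with h | h
      · exact lt_of_le_of_ne h0 h
      · exact absurd hc.symm h
    exact ⟨q, Or.inr ⟨c₁, c₀, by rw [← hc], hc0, hq'⟩, rfl⟩

/-- intersections of the fine bands are subsingletons -/
lemma inter12_sub (k : ℕ) : (Q1s a k ∩ Q2s a k).Subsingleton := by
  have key : ∀ p ∈ Q1s a k ∩ Q2s a k, SMax a 1 2 k p := by
    rintro p ⟨⟨c₀, c₁, hc0, hc1, hc2, hc⟩, ⟨e₀, e₁, he0, he1, he⟩⟩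
    have hs : (0:ℝ) < e₁ - 2*e₀ := by linarith
    have ht : (0:ℝ) ≤ 2*c₀ - c₁ := by linarith
    have hcomb := SMax_comb hs ht hc he
    set w₀ := (e₁ - 2*e₀) * c₀ + (2*c₀ - c₁) * e₀ with hw₀
    set w₁ := (e₁ - 2*e₀) * c₁ + (2*c₀ - c₁) * e₁ with hw₁
    have hww : w₁ = 2 * w₀ := by rw [hw₀, hw₁]; ring
    have hw₀pos : 0 < w₀ := by
      rw [hw₀]
      have : 0 < (e₁ - 2*e₀) * c₀ := mul_pos hs hc0
      have : 0 ≤ (2*c₀ - c₁) * e₀ := mul_nonneg ht he0.le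
      nlinarith [mul_pos hs hc0, mul_nonneg ht he0.le]
    have hsc := SMax_scale (show (0:ℝ) < 1 / w₀ by positivity) hcomb
    have h1 : 1 / w₀ * w₀ = 1 := by field_simp
    have h2 : 1 / w₀ * w₁ = 2 := by rw [hww]; field_simp
    rwa [h1, h2] at hsc
  intro p hp p' hp'
  exact SMax_unique (key p hp) (key p' hp')

lemma inter123_sub (k : ℕ) : ((Q1s a k ∪ Q2s a k) ∩ Q3s a k).Subsingleton := by
  have key : ∀ p ∈ (Q1s a k ∪ Q2s a k) ∩ Q3s a k, SMax a 1 1 k p := by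
    rintro p ⟨hp12, ⟨e₀, e₁, he1, he0, he⟩⟩
    -- extract a witness with c₀ < c₁ from Q1s ∪ Q2s
    obtain ⟨c₀, c₁, hc0, hcc, hc⟩ :
        ∃ c₀ c₁ : ℝ, 0 < c₀ ∧ c₀ < c₁ ∧ SMax a c₀ c₁ k p := by
      rcases hp12 with ⟨c₀, c₁, h0, h1, _, hc⟩ | ⟨c₀, c₁, h0, h1, hc⟩
      · exact ⟨c₀, c₁, h0, h1, hc⟩
      · exact ⟨c₀, c₁, h0, by linarith, hc⟩
    have hs : (0:ℝ) < e₀ - e₁ := by linarith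
    have ht : (0:ℝ) ≤ c₁ - c₀ := by linarith
    have hcomb := SMax_comb hs ht hc he
    set w₀ := (e₀ - e₁) * c₀ + (c₁ - c₀) * e₀ with hw₀
    set w₁ := (e₀ - e₁) * c₁ + (c₁ - c₀) * e₁ with hw₁
    have hww : w₁ = w₀ := by rw [hw₀, hw₁]; ring
    have hw₀pos : 0 < w₀ := by
      rw [hw₀]
      nlinarith [mul_pos hs hc0, mul_nonneg ht (by linarith : (0:ℝ) ≤ e₀)]
    have hsc := SMax_scale (show (0:ℝ) < 1 / w₀ by positivity) hcomb
    have h1 : 1 / w₀ * w₀ = 1 := by field_simp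
    have h2 : 1 / w₀ * w₁ = 1 := by rw [hww]; field_simp
    rwa [h1, h2] at hsc
  intro p hp p' hp'
  exact SMax_unique (key p hp) (key p' hp')

end Classes

section Counting

variable {a : V2}

lemma ncard_le_one_of_subsingleton {s : Set V2} (h : s.Subsingleton) : s.ncard ≤ 1 := by
  rcases h.eq_empty_or_singleton with rfl | ⟨x, rfl⟩ <;> simp

lemma finX {k : ℕ} : (X a k).Finite := X_finite a k
lemma finA {k : ℕ} : (SetA a k).Finite := finX.subset SetA_subset_X
lemma finB {k : ℕ} : (SetB a k).Finite := finX.subset SetB_subset_X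
lemma finC {k : ℕ} : (SetC a k).Finite := finX.subset SetC_subset_X
lemma finD {k : ℕ} : (SetD a k).Finite := finX.subset SetD_subset_X
lemma finQ1 {k : ℕ} : (Q1s a k).Finite := finA.subset Q1s_subset
lemma finQ2 {k : ℕ} : (Q2s a k).Finite := finA.subset Q2s_subset
lemma finQ3 {k : ℕ} : (Q3s a k).Finite := finA.subset Q3s_subset
lemma finQ4 {k : ℕ} : (Q4s a k).Finite := finA.subset Q4s_subset

lemma aRec (ha : a ∈ intQ1) (k : ℕ) :
    (SetA a (k+2)).ncard ≤ (SetA a (k+1)).ncard + 1 := by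
  have h1 : (SetA a (k+2)).ncard ≤
      (Tv '' (Q1s a (k+1) ∪ Q2s a (k+1)) ∪ Sv '' (Q3s a (k+1))).ncard :=
    Set.ncard_le_ncard (SetA_rec ha k)
      (((finQ1.union finQ2).image _).union (finQ3.image _))
  have h2 : (Tv '' (Q1s a (k+1) ∪ Q2s a (k+1)) ∪ Sv '' (Q3s a (k+1))).ncard ≤
      (Q1s a (k+1) ∪ Q2s a (k+1)).ncard + (Q3s a (k+1)).ncard := by
    refine (Set.ncard_union_le _ _).trans ?_
    exact add_le_add (Set.ncard_image_le (finQ1.union finQ2)) (Set.ncard_image_le finQ3)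
  have h3 : (Q1s a (k+1) ∪ Q2s a (k+1)).ncard + (Q3s a (k+1)).ncard =
      ((Q1s a (k+1) ∪ Q2s a (k+1)) ∪ Q3s a (k+1)).ncard +
      ((Q1s a (k+1) ∪ Q2s a (k+1)) ∩ Q3s a (k+1)).ncard :=
    (Set.ncard_union_add_ncard_inter _ _ (finQ1.union finQ2) finQ3).symm
  have h4 : ((Q1s a (k+1) ∪ Q2s a (k+1)) ∪ Q3s a (k+1)).ncard ≤ (SetA a (k+1)).ncard :=
    Set.ncard_le_ncard
      (Set.union_subset (Set.union_subset Q1s_subset Q2s_subset) Q3s_subset) finA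
  have h5 : ((Q1s a (k+1) ∪ Q2s a (k+1)) ∩ Q3s a (k+1)).ncard ≤ 1 :=
    ncard_le_one_of_subsingleton (inter123_sub (k+1))
  omega

lemma bRec (ha : a ∈ intQ1) (k : ℕ) :
    (SetB a (k+2)).ncard ≤ (SetB a (k+1)).ncard + (SetA a (k+1)).ncard := by
  have h1 : (SetB a (k+2)).ncard ≤ (Tv '' (SetB a (k+1) ∪ Q4s a (k+1))).ncard :=
    Set.ncard_le_ncard (SetB_rec ha k) ((finB.union finQ4).image _)
  have h2 : (Tv '' (SetB a (k+1) ∪ Q4s a (k+1))).ncard ≤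
      (SetB a (k+1) ∪ Q4s a (k+1)).ncard := Set.ncard_image_le (finB.union finQ4)
  have h3 : (SetB a (k+1) ∪ Q4s a (k+1)).ncard ≤
      (SetB a (k+1)).ncard + (Q4s a (k+1)).ncard := Set.ncard_union_le _ _
  have h4 : (Q4s a (k+1)).ncard ≤ (SetA a (k+1)).ncard :=
    Set.ncard_le_ncard Q4s_subset finA
  omega

lemma cBound (ha : a ∈ intQ1) {k : ℕ} (hk : 2 ≤ k) : (SetC a k).ncard ≤ 6 := by
  have hsub : SetC a k ⊆
      ({a, Sv a, Tv a, Sv (Tv a), Tv (Sv a), Sv (Tv (Sv a))} : Set V2) := by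
    rintro p ⟨c₀, c₁, h0, h1, hp⟩
    exact swBound ha hk h0 h1 hp
  refine (Set.ncard_le_ncard hsub (Set.toFinite _)).trans ?_
  refine (Set.ncard_insert_le _ _).trans ?_
  refine Nat.add_le_add_right ?_ 1
  refine (Set.ncard_insert_le _ _).trans ?_
  refine Nat.add_le_add_right ?_ 1
  refine (Set.ncard_insert_le _ _).trans ?_
  refine Nat.add_le_add_right ?_ 1
  refine (Set.ncard_insert_le _ _).trans ?_
  refine Nat.add_le_add_right ?_ 1
  refine (Set.ncard_insert_le _ _).trans ?_
  simp

lemma dRec (ha : a ∈ intQ1) (k : ℕ) :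
    (SetD a (k+2)).ncard ≤ (SetB a (k+1)).ncard + (SetC a (k+1)).ncard := by
  have h1 : (SetD a (k+2)).ncard ≤ (Sv '' (SetB a (k+1) ∪ SetC a (k+1))).ncard :=
    Set.ncard_le_ncard (SetD_rec ha k) ((finB.union finC).image _)
  have h2 : (Sv '' (SetB a (k+1) ∪ SetC a (k+1))).ncard ≤
      (SetB a (k+1) ∪ SetC a (k+1)).ncard := Set.ncard_image_le (finB.union finC)
  have h3 : (SetB a (k+1) ∪ SetC a (k+1)).ncard ≤
      (SetB a (k+1)).ncard + (SetC a (k+1)).ncard := Set.ncard_union_le _ _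
  omega

lemma cover (ha : a ∈ intQ1) {k : ℕ} (hk : 1 ≤ k) :
    EPts {M1, M2} a k ⊆ SetA a k ∪ SetB a k ∪ SetC a k ∪ SetD a k := by
  intro p hp
  obtain ⟨c₀, c₁, hne, hsm⟩ := extreme_smax ha hk hp
  by_cases h0 : 0 < c₀
  · by_cases h1 : 0 < c₁
    · exact Or.inl (Or.inl (Or.inl ⟨c₀, c₁, h0, h1, hsm⟩))
    · push_neg at h1
      exact Or.inl (Or.inl (Or.inr ⟨c₀, c₁, h0, h1, hsm⟩))
  · push_neg at h0
    by_cases h1 : c₁ < 0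
    · exact Or.inl (Or.inr ⟨c₀, c₁, h0, h1, hsm⟩)
    · push_neg at h1
      exact Or.inr ⟨c₀, c₁, h0, h1, hne, hsm⟩

lemma a_bound (ha : a ∈ intQ1) : ∀ k, 2 ≤ k → (SetA a k).ncard ≤ k + 2 := by
  intro k hk
  induction k, hk using Nat.le_induction with
  | base =>
    have h1 : (SetA a 2).ncard ≤ (X a 2).ncard := Set.ncard_le_ncard SetA_subset_X finX
    have h2 := X_card_le a 2
    omega
  | succ k hk ih =>
    obtain ⟨m, rfl⟩ : ∃ m, k = m + 1 := ⟨k - 1, by omega⟩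
    have h := aRec ha m
    have e1 : m + 1 + 1 = m + 2 := by omega
    rw [e1] at h ⊢
    omega

lemma b_bound (ha : a ∈ intQ1) : ∀ k, 2 ≤ k → (SetB a k).ncard ≤ k * k := by
  intro k hk
  induction k, hk using Nat.le_induction with
  | base =>
    have h1 : (SetB a 2).ncard ≤ (X a 2).ncard := Set.ncard_le_ncard SetB_subset_X finX
    have h2 := X_card_le a 2
    omega
  | succ k hk ih =>
    obtain ⟨m, rfl⟩ : ∃ m, k = m + 1 := ⟨k - 1, by omega⟩
    have h1 := bRec ha m
    have h2 := a_bound ha (m+1) (by omega)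
    have h3 : (m+1) * (m+1) + ((m+1) + 2) ≤ (m+2) * (m+2) := by nlinarith
    have e1 : m + 1 + 1 = m + 2 := by omega
    rw [e1] at h1 ⊢
    omega

/-- Main bound for `a` in the open first quadrant. -/
lemma NExt_bound_Q1 (ha : a ∈ intQ1) {k : ℕ} (hk : 3 ≤ k) :
    NExt {M1, M2} a k ≤ 10 * k * k := by
  obtain ⟨m, rfl⟩ : ∃ m, k = m + 3 := ⟨k - 3, by omega⟩
  have hcov := cover ha (show 1 ≤ m + 3 by omega)
  have hN : NExt {M1, M2} a (m+3) ≤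
      (SetA a (m+3)).ncard + (SetB a (m+3)).ncard + (SetC a (m+3)).ncard +
      (SetD a (m+3)).ncard := by
    have h1 : NExt {M1, M2} a (m+3) ≤
        (SetA a (m+3) ∪ SetB a (m+3) ∪ SetC a (m+3) ∪ SetD a (m+3)).ncard :=
      Set.ncard_le_ncard hcov (((finA.union finB).union finC).union finD)
    have h2 := Set.ncard_union_le (SetA a (m+3) ∪ SetB a (m+3) ∪ SetC a (m+3)) (SetD a (m+3))
    have h3 := Set.ncard_union_le (SetA a (m+3) ∪ SetB a (m+3)) (SetC a (m+3))
    have h4 := Set.ncard_union_le (SetA a (m+3)) (SetB a (m+3))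
    unfold NExt at h1 ⊢
    omega
  have hA := a_bound ha (m+3) (by omega)
  have hB := b_bound ha (m+3) (by omega)
  have hC := cBound ha (show 2 ≤ m + 3 by omega)
  have hD : (SetD a (m+3)).ncard ≤ (m+2) * (m+2) + 6 := by
    have h1 := dRec ha (m+1)
    have h2 := b_bound ha (m+2) (by omega)
    have h3 := cBound ha (show 2 ≤ m + 2 by omega)
    have e1 : m + 1 + 2 = m + 3 := by omega
    have e2 : m + 1 + 1 = m + 2 := by omega
    rw [e1, e2] at h1
    omega
  have : (m+3) + 2 + (m+3) * (m+3) + 6 + ((m+2) * (m+2) + 6) ≤ 10 * (m+3) * (m+3) := by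
    nlinarith
  omega

end Counting

section NegSym

lemma Sv_neg (u : V2) : Sv (-u) = -(Sv u) := by
  funext i; fin_cases i <;> simp [Sv]

lemma Tv_neg (u : V2) : Tv (-u) = -(Tv u) := by
  funext i; fin_cases i <;> simp [Tv] <;> ring

lemma X_neg (a : V2) (k : ℕ) : X (-a) k = (fun u : V2 => -u) '' X a k := by
  induction k with
  | zero => simp [X_zero]
  | succ k ih =>
    rw [X_succ, X_succ, ih, Set.image_union, Set.image_image, Set.image_image,
      Set.image_image, Set.image_image]
    congr 1
    · apply Set.image_congr
      intro u _
      exact Sv_neg u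
    · apply Set.image_congr
      intro u _
      exact Tv_neg u

lemma neg_openSegment {x y z : V2} (hx : x ∈ openSegment ℝ y z) :
    -x ∈ openSegment ℝ (-y) (-z) := by
  obtain ⟨s, t, hs, ht, hst, rfl⟩ := hx
  exact ⟨s, t, hs, ht, hst, by simp [smul_neg]; abel⟩

lemma extremePoints_neg (P : Set V2) :
    extremePoints ℝ ((fun u : V2 => -u) '' P) = (fun u : V2 => -u) '' extremePoints ℝ P := by
  have key : ∀ Q : Set V2, (fun u : V2 => -u) '' extremePoints ℝ Q ⊆
      extremePoints ℝ ((fun u : V2 => -u) '' Q) := by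
    intro Q
    rintro x ⟨p, ⟨hpQ, hpseg⟩, rfl⟩
    refine ⟨⟨p, hpQ, rfl⟩, ?_⟩
    rintro y ⟨y', hy', rfl⟩ z ⟨z', hz', rfl⟩ hseg
    have := neg_openSegment hseg
    simp only [neg_neg] at this
    obtain ⟨h1, h2⟩ := hpseg hy' hz' this
    constructor <;> simp [h1, h2]
  apply Set.Subset.antisymm
  · intro x hx
    have h2 := key ((fun u : V2 => -u) '' P)
    have hPP : (fun u : V2 => -u) '' ((fun u : V2 => -u) '' P) = P := by
      rw [Set.image_image]; simp
    refine ⟨-x, ?_, by simp⟩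
    have := h2 ⟨x, hx, rfl⟩
    rwa [hPP] at this
  · exact key P

lemma NExt_neg (a : V2) (k : ℕ) : NExt {M1, M2} (-a) k = NExt {M1, M2} a k := by
  unfold NExt EPts PHull
  have hX : XSeq {M1, M2} (-a) k = (fun u : V2 => -u) '' XSeq {M1, M2} a k := X_neg a k
  rw [hX]
  have hhull : convexHull ℝ ((fun u : V2 => -u) '' XSeq {M1, M2} a k) =
      (fun u : V2 => -u) '' convexHull ℝ (XSeq {M1, M2} a k) := by
    rw [Set.image_neg_eq_neg, Set.image_neg_eq_neg, convexHull_neg]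
  rw [hhull, extremePoints_neg]
  exact Set.ncard_image_of_injective _ neg_injective

end NegSym
end Stmt7Aux

/-- `N_k(Σ₁, a) = O(k²)` for `a` in the interior of the first or third quadrant. -/
theorem stmt7 : ∃ α : ℝ, 0 < α ∧ ∃ k₀ : ℕ, ∀ a : Fin 2 → ℝ,
    a ∈ intQ1 ∪ intQ3 → ∀ k : ℕ, k₀ ≤ k →
      (NExt {M1, M2} a k : ℝ) ≤ α * (k : ℝ) ^ 2 := by
  refine ⟨10, by norm_num, 3, ?_⟩
  intro a ha k hk
  have hnat : NExt {M1, M2} a k ≤ 10 * k * k := by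
    rcases ha with ha | ha
    · exact Stmt7Aux.NExt_bound_Q1 ha hk
    · have hb : -a ∈ intQ1 := by
        constructor <;> simp only [Pi.neg_apply] <;> [linarith [ha.1]; linarith [ha.2]]
      have h1 : NExt {M1, M2} (-(-a)) k = NExt {M1, M2} (-a) k := Stmt7Aux.NExt_neg (-a) k
      rw [neg_neg] at h1
      rw [h1]
      exact Stmt7Aux.NExt_bound_Q1 hb hk
  calc (NExt {M1, M2} a k : ℝ) ≤ ((10 * k * k : ℕ) : ℝ) := by exact_mod_cast hnat
    _ = 10 * (k : ℝ) ^ 2 := by push_cast; ring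


end
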